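/- For every α ∈ (0, 1/4), the process (x, u₁, u₂, w₁, w₂) with x(t) = −4αt, u₁(t) ≡ −α, u₂(t) ≡ 0, w₁(t) ≡ 1, w₂(t) ≡ 0 is admissible for problem (L) and its cost equals ∫_0^1 (|x(t) − u₁(t)| + x(t)) dt = −3α/4 < 0. Consequently, since the process (x, u₁, u₂, w₁, w₂) = (0, 0, 0, 1, 0) is admissible for (L) with cost 0, the zero process is not a minimizer of problem (L). -/

import Mathlib

open MeasureTheory Set Filter

noncomputable section

/-- An admissible process for problem (L) on `[0,1]`: `x` is absolutely continuous (encoded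
via an integrable derivative `x'` and the integral representation), with
`ẋ(t) = 4w₁(t)u₁(t) + 4w₂(t)u₂(t)` a.e., state constraint `x(t) ≥ -1` on `[0,1]`, control
constraints `u₁(t), u₂(t) ∈ [-1,1]` a.e., `(w₁(t), w₂(t)) ∈ W` a.e. (i.e. `w₁, w₂ ≥ 0` and
`w₁ + w₂ = 1`), and `x(0) = 0`. -/
def AdmissibleL (x u₁ u₂ w₁ w₂ : ℝ → ℝ) : Prop :=
  (∃ x' : ℝ → ℝ, IntegrableOn x' (Icc (0:ℝ) 1) ∧
    (∀ t ∈ Icc (0:ℝ) 1, x t = x 0 + ∫ s in (0:ℝ)..t, x' s) ∧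
    (∀ᵐ t ∂(volume.restrict (Icc (0:ℝ) 1)),
      x' t = 4 * w₁ t * u₁ t + 4 * w₂ t * u₂ t)) ∧
  (∀ t ∈ Icc (0:ℝ) 1, -1 ≤ x t) ∧
  AEStronglyMeasurable u₁ (volume.restrict (Icc (0:ℝ) 1)) ∧
  AEStronglyMeasurable u₂ (volume.restrict (Icc (0:ℝ) 1)) ∧
  AEStronglyMeasurable w₁ (volume.restrict (Icc (0:ℝ) 1)) ∧
  AEStronglyMeasurable w₂ (volume.restrict (Icc (0:ℝ) 1)) ∧
  (∀ᵐ t ∂(volume.restrict (Icc (0:ℝ) 1)), u₁ t ∈ Icc (-1:ℝ) 1) ∧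
  (∀ᵐ t ∂(volume.restrict (Icc (0:ℝ) 1)), u₂ t ∈ Icc (-1:ℝ) 1) ∧
  (∀ᵐ t ∂(volume.restrict (Icc (0:ℝ) 1)), 0 ≤ w₁ t ∧ 0 ≤ w₂ t ∧ w₁ t + w₂ t = 1) ∧
  x 0 = 0

/-- The cost of a process for problem (L). -/
def costL (x u₁ u₂ w₁ w₂ : ℝ → ℝ) : ℝ :=
  ∫ t in (0:ℝ)..1, (w₁ t * |x t - u₁ t| + w₂ t * |x t - u₂ t| + x t)


lemma integral_val_aux (α : ℝ) (hα : 0 < α) :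
    (∫ t in (0:ℝ)..1, (|(-4 * α * t) - (-α)| + -4 * α * t)) = -(3 * α) / 4 := by
  have hcont : Continuous fun t : ℝ => |(-4 * α * t) - (-α)| + -4 * α * t := by
    fun_prop
  have hsplit := intervalIntegral.integral_add_adjacent_intervals
    (hcont.intervalIntegrable (μ := volume) 0 (1/4)) (hcont.intervalIntegrable (1/4) 1)
  rw [← hsplit]
  have h1 : (∫ t in (0:ℝ)..(1/4), (|(-4 * α * t) - (-α)| + -4 * α * t))
      = ∫ t in (0:ℝ)..(1/4), (α - 8 * α * t) := by
    apply intervalIntegral.integral_congr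
    intro t ht
    rw [uIcc_of_le (by norm_num)] at ht
    have h0 : (0:ℝ) ≤ (-4 * α * t) - (-α) := by nlinarith [ht.1, ht.2]
    simp only []; rw [abs_of_nonneg h0]; ring
  have h2 : (∫ t in (1/4:ℝ)..1, (|(-4 * α * t) - (-α)| + -4 * α * t))
      = ∫ t in (1/4:ℝ)..1, (-α : ℝ) := by
    apply intervalIntegral.integral_congr
    intro t ht
    rw [uIcc_of_le (by norm_num)] at ht
    have h0 : (-4 * α * t) - (-α) ≤ 0 := by nlinarith [ht.1, ht.2]
    simp only []; rw [abs_of_nonpos h0]; ring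
  rw [h1, h2]
  rw [intervalIntegral.integral_sub intervalIntegrable_const
    ((by fun_prop : Continuous fun t : ℝ => 8 * α * t).intervalIntegrable _ _),
    intervalIntegral.integral_const, intervalIntegral.integral_const_mul,
    integral_id, intervalIntegral.integral_const]
  simp
  ring


lemma admissible_alpha (α : ℝ) (ha : 0 < α) (hb : α < 1/4) :
    AdmissibleL (fun t => -4 * α * t) (fun _ => -α) (fun _ => 0) (fun _ => 1)
      (fun _ => 0) := by
  refine ⟨⟨fun _ => -4 * α, ?_, ?_, ?_⟩, ?_, aestronglyMeasurable_const,
    aestronglyMeasurable_const, aestronglyMeasurable_const, aestronglyMeasurable_const,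
    ?_, ?_, ?_, by ring⟩
  · exact integrableOn_const measure_Icc_lt_top.ne
  · intro t ht
    simp [intervalIntegral.integral_const]
    ring
  · exact Eventually.of_forall fun t => by norm_num
  · intro t ht
    obtain ⟨h0, h1⟩ := ht
    show -1 ≤ -4 * α * t
    nlinarith
  · exact Eventually.of_forall fun t =>
      ⟨show (-1:ℝ) ≤ -α by linarith, show -α ≤ (1:ℝ) by linarith⟩
  · exact Eventually.of_forall fun t => ⟨by norm_num, by norm_num⟩
  · exact Eventually.of_forall fun t => ⟨by norm_num, by norm_num, by norm_num⟩

lemma admissible_zero :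
    AdmissibleL (fun _ => 0) (fun _ => 0) (fun _ => 0) (fun _ => 1) (fun _ => 0) := by
  refine ⟨⟨fun _ => 0, ?_, ?_, ?_⟩, ?_, aestronglyMeasurable_const,
    aestronglyMeasurable_const, aestronglyMeasurable_const, aestronglyMeasurable_const,
    ?_, ?_, ?_, rfl⟩
  · exact integrableOn_const measure_Icc_lt_top.ne
  · intro t ht; simp
  · exact Eventually.of_forall fun t => by norm_num
  · intro t ht; norm_num
  · exact Eventually.of_forall fun t => ⟨by norm_num, by norm_num⟩
  · exact Eventually.of_forall fun t => ⟨by norm_num, by norm_num⟩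
  · exact Eventually.of_forall fun t => ⟨by norm_num, by norm_num, by norm_num⟩


/-- for every `α ∈ (0, 1/4)` the process
`(x, u₁, u₂, w₁, w₂) = (-4αt, -α, 0, 1, 0)` is admissible for (L) with cost
`∫₀¹ (|x - u₁| + x) dt = -3α/4 < 0`; since the zero process `(0,0,0,1,0)` is admissible
with cost `0`, the zero process is not a minimizer of problem (L). -/
theorem example_L_zero_process_not_optimal :
    (∀ α ∈ Ioo (0:ℝ) (1/4),
      AdmissibleL (fun t => -4 * α * t) (fun _ => -α) (fun _ => 0) (fun _ => 1)
        (fun _ => 0) ∧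
      costL (fun t => -4 * α * t) (fun _ => -α) (fun _ => 0) (fun _ => 1) (fun _ => 0)
        = (∫ t in (0:ℝ)..1, (|(-4 * α * t) - (-α)| + -4 * α * t)) ∧
      (∫ t in (0:ℝ)..1, (|(-4 * α * t) - (-α)| + -4 * α * t)) = -(3 * α) / 4 ∧
      -(3 * α) / 4 < 0) ∧
    AdmissibleL (fun _ => 0) (fun _ => 0) (fun _ => 0) (fun _ => 1) (fun _ => 0) ∧
    costL (fun _ => 0) (fun _ => 0) (fun _ => 0) (fun _ => 1) (fun _ => 0) = 0 ∧
    ¬ (∀ x u₁ u₂ w₁ w₂, AdmissibleL x u₁ u₂ w₁ w₂ →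
        costL (fun _ => 0) (fun _ => 0) (fun _ => 0) (fun _ => 1) (fun _ => 0)
          ≤ costL x u₁ u₂ w₁ w₂) := by
  have hzero : costL (fun _ => 0) (fun _ => 0) (fun _ => 0) (fun _ => 1) (fun _ => 0) = 0 := by
    simp [costL]
  have hcost : ∀ α : ℝ,
      costL (fun t => -4 * α * t) (fun _ => -α) (fun _ => 0) (fun _ => 1) (fun _ => 0)
        = (∫ t in (0:ℝ)..1, (|(-4 * α * t) - (-α)| + -4 * α * t)) := by
    intro α
    simp only [costL, one_mul, zero_mul, add_zero]
  refine ⟨fun α hα => ⟨admissible_alpha α hα.1 hα.2, hcost α, integral_val_aux α hα.1,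
      by linarith [hα.1]⟩, admissible_zero, hzero, ?_⟩
  intro h
  have h8 : (1/8 : ℝ) ∈ Ioo (0:ℝ) (1/4) := by norm_num
  have := h _ _ _ _ _ (admissible_alpha (1/8) (by norm_num) (by norm_num))
  rw [hzero, hcost, integral_val_aux (1/8) (by norm_num)] at this
  norm_num at this
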